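/- Let C = {(t, g(t)) : t ∈ [0,1]} be the graph of a continuous convex function g : [0,1] → ℝ, and let f : C → ℂ. Then var(f, C) ≤ pvar(f, C) ≤ 2·var(f, C), where var is the two-dimensional variation and pvar is the variation along the parameterization γ(t) = (t, g(t)). -/

import Mathlib

open scoped ENNReal NNReal

/-- Cross product of two planar vectors. -/
def crossR (v w : ℝ × ℝ) : ℝ := v.1 * w.2 - v.2 * w.1

/-- Signed side of the point `x` relative to the line through `u` with direction `v`. -/
def sideR (u v x : ℝ × ℝ) : ℝ := crossR v (x - u)

/-- The segment `[x i, x (i+1)]` is a crossing segment of the list `x` on the line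
through `u` with direction `v`. -/
def CrossSeg {n : ℕ} (u v : ℝ × ℝ) (x : Fin (n+1) → ℝ × ℝ) (i : Fin n) : Prop :=
  (sideR u v (x i.castSucc) * sideR u v (x i.succ) < 0) ∨
  ((i : ℕ) = 0 ∧ sideR u v (x i.castSucc) = 0) ∨
  (sideR u v (x i.castSucc) ≠ 0 ∧ sideR u v (x i.succ) = 0)

/-- Number of crossing segments of a list on a given line. -/
noncomputable def vfLine {n : ℕ} (u v : ℝ × ℝ) (x : Fin (n+1) → ℝ × ℝ) : ℕ :=
  Nat.card {i : Fin n // CrossSeg u v x i}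

/-- Variation factor of a list: the maximum of `vfLine` over all lines. -/
noncomputable def vf {n : ℕ} (x : Fin (n+1) → ℝ × ℝ) : ℕ :=
  sSup {m : ℕ | ∃ u v : ℝ × ℝ, v ≠ 0 ∧ m = vfLine u v x}

/-- Curve variation of `f` along a list of points. -/
noncomputable def cvar {n : ℕ} (f : ℝ × ℝ → ℂ) (x : Fin (n+1) → ℝ × ℝ) : ℝ :=
  ∑ i : Fin n, ‖f (x i.succ) - f (x i.castSucc)‖

/-- Two-dimensional variation of `f` on `σ`. -/
noncomputable def twoVar (f : ℝ × ℝ → ℂ) (σ : Set (ℝ × ℝ)) : ℝ≥0∞ :=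
  ⨆ (n : ℕ) (x : Fin (n+1) → ℝ × ℝ) (_ : ∀ i, x i ∈ σ)
    (_ : ∀ i : Fin n, x i.castSucc ≠ x i.succ),
    ENNReal.ofReal (cvar f x) / (vf x : ℝ≥0∞)

/- ### Auxiliary lemmas -/

lemma sideR_eval (u v : ℝ × ℝ) (a b : ℝ) :
    sideR u v (a, b) = v.1 * (b - u.2) - v.2 * (a - u.1) := by
  simp [sideR, crossR, Prod.fst_sub, Prod.snd_sub]

lemma sideR_vert (s : ℝ) (y : ℝ × ℝ) : sideR (s, 0) (0, 1) y = s - y.1 := by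
  simp [sideR, crossR, Prod.fst_sub, Prod.snd_sub]

lemma edist_telescope (F : ℝ → ℂ) (σ : ℕ → ℝ) (p : ℕ) :
    ∀ q : ℕ, p ≤ q →
      edist (F (σ q)) (F (σ p)) ≤ ∑ j ∈ Finset.Ico p q, edist (F (σ (j+1))) (F (σ j)) := by
  intro q hq
  induction q, hq using Nat.le_induction with
  | base => simp
  | succ q hpq ih =>
      rw [Finset.sum_Ico_succ_top (by omega)]
      calc edist (F (σ (q+1))) (F (σ p))
          ≤ edist (F (σ (q+1))) (F (σ q)) + edist (F (σ q)) (F (σ p)) :=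
            edist_triangle _ _ _
        _ ≤ edist (F (σ (q+1))) (F (σ q)) + ∑ j ∈ Finset.Ico p q, edist (F (σ (j+1))) (F (σ j)) :=
            add_le_add_right ih _
        _ = _ := by rw [add_comm]

lemma vfLine_le {n : ℕ} (u v : ℝ × ℝ) (x : Fin (n+1) → ℝ × ℝ) : vfLine u v x ≤ n := by
  classical
  rw [vfLine, Nat.card_eq_fintype_card]
  simpa using Fintype.card_subtype_le (CrossSeg u v x)

lemma vfLine_le_vf {n : ℕ} (u v : ℝ × ℝ) (hv : v ≠ 0) (x : Fin (n+1) → ℝ × ℝ) :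
    vfLine u v x ≤ vf x := by
  apply le_csSup
  · exact ⟨n, fun m hm => by obtain ⟨u', v', _, rfl⟩ := hm; exact vfLine_le u' v' x⟩
  · exact ⟨u, v, hv, rfl⟩

lemma vf_le {n : ℕ} (x : Fin (n+1) → ℝ × ℝ) (k : ℕ)
    (h : ∀ u v : ℝ × ℝ, v ≠ 0 → vfLine u v x ≤ k) : vf x ≤ k := by
  have hne : {m : ℕ | ∃ u v : ℝ × ℝ, v ≠ 0 ∧ m = vfLine u v x}.Nonempty :=
    ⟨vfLine 0 (0, 1) x, 0, (0, 1), by norm_num [Prod.ext_iff], rfl⟩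
  rw [vf]
  apply csSup_le hne
  rintro m ⟨u, v, hv, rfl⟩
  exact h u v hv


lemma left_ineq (g : ℝ → ℝ) (f : ℝ × ℝ → ℂ) {n : ℕ}
    (x : Fin (n+1) → ℝ × ℝ)
    (hmem : ∀ i, x i ∈ (fun t => (t, g t)) '' Set.Icc (0:ℝ) 1)
    (hne : ∀ i : Fin n, x i.castSucc ≠ x i.succ) :
    ENNReal.ofReal (cvar f x) / (vf x : ℝ≥0∞)
      ≤ eVariationOn (fun t => f (t, g t)) (Set.Icc 0 1) := by
  classical
  set F : ℝ → ℂ := fun t => f (t, g t) with hF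
  set t : Fin (n+1) → ℝ := fun i => (x i).1 with ht
  have hxt : ∀ i, x i = (t i, g (t i)) := by
    intro i
    obtain ⟨a, _, hae⟩ := hmem i
    have h1 : t i = a := by rw [ht]; simp [← hae]
    rw [h1, ← hae]
  have htI : ∀ i, t i ∈ Set.Icc (0:ℝ) 1 := by
    intro i
    obtain ⟨a, haI, hae⟩ := hmem i
    have h1 : t i = a := by rw [ht]; simp [← hae]
    rwa [h1]
  have htne : ∀ i : Fin n, t i.castSucc ≠ t i.succ := by
    intro i h
    exact hne i (by rw [hxt i.castSucc, hxt i.succ, h])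
  -- the grid
  set T : Finset ℝ := Finset.image t Finset.univ with hT
  set M := T.card with hMdef
  set e := T.orderIsoOfFin rfl with he
  set σ : ℕ → ℝ := fun j => if h : j < M then (e ⟨j, h⟩ : ℝ) else 1 with hσ
  have hσT : ∀ j (h : j < M), σ j = (e ⟨j, h⟩ : ℝ) := fun j h => by rw [hσ]; simp [h]
  have hTmem : ∀ a : ℝ, a ∈ T → a ∈ Set.Icc (0:ℝ) 1 := by
    intro a ha
    rw [hT, Finset.mem_image] at ha
    obtain ⟨i, _, rfl⟩ := ha
    exact htI i
  have hσI : ∀ j, σ j ∈ Set.Icc (0:ℝ) 1 := by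
    intro j
    by_cases h : j < M
    · rw [hσT j h]; exact hTmem _ (e ⟨j, h⟩).2
    · rw [hσ]; simp [h]
  have hσmono : Monotone σ := by
    intro j k hjk
    by_cases hj : j < M
    · by_cases hk : k < M
      · rw [hσT j hj, hσT k hk]
        exact Subtype.coe_le_coe.mpr (e.monotone (by exact hjk))
      · rw [hσT j hj, hσ]; simp only [hk, dif_neg, not_false_iff]
        exact (hTmem _ (e ⟨j, hj⟩).2).2
    · have hk : ¬ k < M := fun h => hj (lt_of_le_of_lt hjk h)
      rw [hσ]; simp [hj, hk]
  have hσstrict : ∀ j k : ℕ, j < k → k < M → σ j < σ k := by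
    intro j k hjk hk
    have hj : j < M := lt_trans hjk hk
    rw [hσT j hj, hσT k hk]
    exact Subtype.coe_lt_coe.mpr (e.strictMono (by exact hjk))
  -- indices of grid points
  set idx : ∀ a : ℝ, a ∈ T → ℕ := fun a ha => ((e.symm ⟨a, ha⟩ : Fin M) : ℕ) with hidx
  have hidxM : ∀ a ha, idx a ha < M := fun a ha => (e.symm ⟨a, ha⟩).isLt
  have hσidx : ∀ a ha, σ (idx a ha) = a := by
    intro a ha
    rw [hσT _ (hidxM a ha)]
    have h2 : e ⟨idx a ha, hidxM a ha⟩ = ⟨a, ha⟩ :=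
      (congrArg e (Fin.eta (e.symm ⟨a, ha⟩) (hidxM a ha))).trans (e.apply_symm_apply ⟨a, ha⟩)
    exact congrArg Subtype.val h2
  -- endpoints
  set A : Fin n → ℝ := fun i => min (t i.castSucc) (t i.succ) with hA
  set B : Fin n → ℝ := fun i => max (t i.castSucc) (t i.succ) with hB
  have hAT : ∀ i, A i ∈ T := by
    intro i; rw [hA]
    rcases min_cases (t i.castSucc) (t i.succ) with ⟨h, _⟩ | ⟨h, _⟩ <;>
      · simp only [h]; exact Finset.mem_image_of_mem t (Finset.mem_univ _)
  have hBT : ∀ i, B i ∈ T := by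
    intro i; rw [hB]
    rcases max_cases (t i.castSucc) (t i.succ) with ⟨h, _⟩ | ⟨h, _⟩ <;>
      · simp only [h]; exact Finset.mem_image_of_mem t (Finset.mem_univ _)
  have hAB : ∀ i, A i < B i := fun i => min_lt_max.mpr (htne i)
  set p : Fin n → ℕ := fun i => idx (A i) (hAT i) with hp
  set q : Fin n → ℕ := fun i => idx (B i) (hBT i) with hq
  have hσp : ∀ i, σ (p i) = A i := fun i => hσidx _ _
  have hσq : ∀ i, σ (q i) = B i := fun i => hσidx _ _
  have hqM : ∀ i, q i < M := fun i => hidxM _ _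
  have hpq : ∀ i, p i < q i := by
    intro i
    by_contra hcon
    push_neg at hcon
    have := hσmono hcon
    rw [hσp, hσq] at this
    exact absurd this (not_le.mpr (hAB i))
  set d : ℕ → ℝ≥0∞ := fun j => edist (F (σ (j+1))) (F (σ j)) with hd
  -- step 1 : cvar as edist sum
  have step1 : ENNReal.ofReal (cvar f x) = ∑ i : Fin n, edist (F (t i.succ)) (F (t i.castSucc)) := by
    rw [cvar, ENNReal.ofReal_sum_of_nonneg (fun i _ => norm_nonneg _)]
    refine Finset.sum_congr rfl (fun i _ => ?_)
    rw [edist_dist, Complex.dist_eq, hxt i.succ, hxt i.castSucc]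
  -- step 2 : telescope
  have step2 : ∀ i : Fin n, edist (F (t i.succ)) (F (t i.castSucc))
      ≤ ∑ j ∈ Finset.Ico (p i) (q i), d j := by
    intro i
    have key : edist (F (B i)) (F (A i)) ≤ ∑ j ∈ Finset.Ico (p i) (q i), d j := by
      have := edist_telescope F σ (p i) (q i) (le_of_lt (hpq i))
      rwa [hσp, hσq] at this
    rcases lt_or_gt_of_ne (htne i) with h | h
    · have hA' : A i = t i.castSucc := min_eq_left h.le
      have hB' : B i = t i.succ := max_eq_right h.le
      rwa [hA', hB'] at key
    · have hA' : A i = t i.succ := min_eq_right h.le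
      have hB' : B i = t i.castSucc := max_eq_left h.le
      rw [hA', hB'] at key
      rwa [edist_comm]
  -- step 3 : rewrite as filtered sum over range (M-1)
  have step3 : ∀ i : Fin n, ∑ j ∈ Finset.Ico (p i) (q i), d j
      = ∑ j ∈ Finset.range (M-1), if p i ≤ j ∧ j < q i then d j else 0 := by
    intro i
    rw [← Finset.sum_filter]
    congr 1
    ext j
    simp only [Finset.mem_Ico, Finset.mem_filter, Finset.mem_range]
    have := hqM i
    omega
  -- multiplicity bound
  have mult : ∀ j ∈ Finset.range (M-1),
      (Finset.univ.filter (fun i : Fin n => p i ≤ j ∧ j < q i)).card ≤ vf x := by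
    intro j hj
    rw [Finset.mem_range] at hj
    set s : ℝ := (σ j + σ (j+1))/2 with hs
    have hσj : σ j < σ (j+1) := hσstrict j (j+1) (by omega) (by omega)
    have hcross : ∀ i : Fin n, (p i ≤ j ∧ j < q i) → CrossSeg ((s,0)) ((0,1)) x i := by
      intro i ⟨h1, h2⟩
      have hA1 : A i ≤ σ j := by rw [← hσp i]; exact hσmono h1
      have hB1 : σ (j+1) ≤ B i := by rw [← hσq i]; exact hσmono (by omega)
      have hAs : A i < s := by rw [hs]; linarith
      have hsB : s < B i := by rw [hs]; linarith
      left
      rw [sideR_vert, sideR_vert]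
      have hc : (x i.castSucc).1 = t i.castSucc := rfl
      have hc2 : (x i.succ).1 = t i.succ := rfl
      rw [hc, hc2]
      rcases lt_or_gt_of_ne (htne i) with h | h
      · have hA' : A i = t i.castSucc := min_eq_left h.le
        have hB' : B i = t i.succ := max_eq_right h.le
        rw [← hA', ← hB']
        exact mul_neg_of_pos_of_neg (by linarith) (by linarith)
      · have hA' : A i = t i.succ := min_eq_right h.le
        have hB' : B i = t i.castSucc := max_eq_left h.le
        rw [← hA', ← hB']
        nlinarith
    calc (Finset.univ.filter (fun i : Fin n => p i ≤ j ∧ j < q i)).card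
        ≤ (Finset.univ.filter (CrossSeg ((s,0)) ((0,1)) x)).card := by
          apply Finset.card_le_card
          intro i hi
          rw [Finset.mem_filter] at hi ⊢
          exact ⟨hi.1, hcross i hi.2⟩
      _ = vfLine ((s,0)) ((0,1)) x := by
          rw [vfLine, Nat.card_eq_fintype_card, Fintype.card_subtype]
      _ ≤ vf x := vfLine_le_vf _ _ (by norm_num [Prod.ext_iff]) x
  -- put it together
  apply ENNReal.div_le_of_le_mul
  rw [step1]
  calc ∑ i : Fin n, edist (F (t i.succ)) (F (t i.castSucc))
      ≤ ∑ i : Fin n, ∑ j ∈ Finset.range (M-1), (if p i ≤ j ∧ j < q i then d j else 0) := by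
        apply Finset.sum_le_sum
        intro i _
        rw [← step3 i]
        exact step2 i
    _ = ∑ j ∈ Finset.range (M-1), ∑ i : Fin n, (if p i ≤ j ∧ j < q i then d j else 0) :=
        Finset.sum_comm
    _ = ∑ j ∈ Finset.range (M-1),
          ((Finset.univ.filter (fun i : Fin n => p i ≤ j ∧ j < q i)).card : ℕ) • d j := by
        refine Finset.sum_congr rfl (fun j _ => ?_)
        rw [← Finset.sum_filter, Finset.sum_const]
    _ ≤ ∑ j ∈ Finset.range (M-1), (vf x) • d j := by
        apply Finset.sum_le_sum
        intro j hj
        rw [nsmul_eq_mul, nsmul_eq_mul]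
        exact mul_le_mul_left (by exact_mod_cast mult j hj) (d j)
    _ = (vf x : ℝ≥0∞) * ∑ j ∈ Finset.range (M-1), d j := by
        rw [← Finset.smul_sum, nsmul_eq_mul]
    _ ≤ eVariationOn F (Set.Icc 0 1) * (vf x : ℝ≥0∞) := by
        rw [mul_comm]
        exact mul_le_mul_left (eVariationOn.sum_le (f := F) (n := M-1) hσmono hσI) _


lemma sideR_negdir (u v y : ℝ × ℝ) : sideR u (-v) y = - sideR u v y := by
  simp only [sideR, crossR, Prod.fst_neg, Prod.snd_neg]
  ring

lemma crossSeg_negdir {n : ℕ} (u v : ℝ × ℝ) (x : Fin (n+1) → ℝ × ℝ) (i : Fin n) :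
    CrossSeg u (-v) x i ↔ CrossSeg u v x i := by
  rw [CrossSeg, CrossSeg]
  simp only [sideR_negdir, neg_mul_neg, neg_eq_zero, ne_eq]

lemma vfLine_negdir {n : ℕ} (u v : ℝ × ℝ) (x : Fin (n+1) → ℝ × ℝ) :
    vfLine u (-v) x = vfLine u v x := by
  rw [vfLine, vfLine]
  exact Nat.card_congr (Equiv.subtypeEquivRight (fun i => crossSeg_negdir u v x i))

lemma crossings_le_two {m : ℕ} (u v : ℝ × ℝ) (x : Fin (m+1) → ℝ × ℝ)
    (H1 : ∀ a b c : Fin (m+1), a < b → b < c → sideR u v (x a) ≤ 0 → sideR u v (x c) ≤ 0 →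
      sideR u v (x b) ≤ 0)
    (H2 : ∀ a b c : Fin (m+1), a < b → b < c → sideR u v (x a) ≤ 0 → sideR u v (x c) ≤ 0 →
      (sideR u v (x a) < 0 ∨ sideR u v (x c) < 0) → sideR u v (x b) < 0) :
    vfLine u v x ≤ 2 := by
  classical
  set s : Fin (m+1) → ℝ := fun j => sideR u v (x j) with hs
  set Us : Set (Fin m) := {i | s i.castSucc < 0 ∧ 0 ≤ s i.succ} with hUs
  set Ds : Set (Fin m) := {i | 0 < s i.castSucc ∧ s i.succ ≤ 0} with hDs
  set Zs : Set (Fin m) := {i | (i : ℕ) = 0} with hZs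
  have hcs : ∀ i : Fin m, i.castSucc < i.succ := fun _ => Fin.castSucc_lt_succ
  have hsc : ∀ i j : Fin m, i < j → i.succ ≤ j.castSucc := by
    intro i j hij
    rw [Fin.le_def]
    simp only [Fin.val_succ, Fin.coe_castSucc]
    exact hij
  have hcc : ∀ i j : Fin m, i < j → i.castSucc < j.castSucc := fun i j hij => by
    rwa [Fin.castSucc_lt_castSucc_iff]
  have keyU : ∀ i j : Fin m, i ∈ Us → j ∈ Us → i < j → False := by
    intro i j hi hj hij
    simp only [hUs, Set.mem_setOf_eq] at hi hj
    rcases eq_or_lt_of_le (hsc i j hij) with he | hl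
    · rw [he] at hi
      linarith [hi.2, hj.1]
    · exact absurd (H2 i.castSucc i.succ j.castSucc (hcs i) hl hi.1.le hj.1.le (Or.inl hi.1))
        (not_lt.mpr hi.2)
  have keyD : ∀ i j : Fin m, i ∈ Ds → j ∈ Ds → i < j → False := by
    intro i j hi hj hij
    simp only [hDs, Set.mem_setOf_eq] at hi hj
    rcases eq_or_lt_of_le (hsc i j hij) with he | hl
    · rw [he] at hi
      linarith [hi.2, hj.1]
    · exact absurd (H1 i.succ j.castSucc j.succ hl (hcs j) hi.2 hj.2) (not_le.mpr hj.1)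
  have keyUD : ∀ i j : Fin m, i ∈ Us → j ∈ Ds → i < j → False := by
    intro i j hi hj hij
    simp only [hUs, hDs, Set.mem_setOf_eq] at hi hj
    exact absurd (H2 i.castSucc j.castSucc j.succ (hcc i j hij) (hcs j) hi.1.le hj.2
      (Or.inl hi.1)) (not_lt.mpr hj.1.le)
  have keyZDU : s 0 = 0 → ∀ j k : Fin m, j ∈ Ds → k ∈ Us → j < k → False := by
    intro h0 j k hj hk hjk
    simp only [hDs, hUs, Set.mem_setOf_eq] at hj hk
    have hj0 : (0 : Fin (m+1)) < j.castSucc := by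
      rw [Fin.pos_iff_ne_zero]
      intro hh
      rw [hh, h0] at hj
      exact lt_irrefl 0 hj.1
    exact absurd (H2 0 j.castSucc k.castSucc hj0 (hcc j k hjk) (le_of_eq h0) hk.1.le
      (Or.inr hk.1)) (not_lt.mpr hj.1.le)
  have classify : ∀ i : Fin m, CrossSeg u v x i →
      i ∈ Us ∨ i ∈ Ds ∨ (i ∈ Zs ∧ s i.castSucc = 0) := by
    intro i hi
    rcases hi with h | ⟨h0, hz⟩ | ⟨hne0, hz⟩
    · rcases mul_neg_iff.mp h with ⟨h1, h2⟩ | ⟨h1, h2⟩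
      · exact Or.inr (Or.inl ⟨h1, h2.le⟩)
      · exact Or.inl ⟨h1, h2.le⟩
    · exact Or.inr (Or.inr ⟨h0, hz⟩)
    · rcases lt_or_gt_of_ne hne0 with h | h
      · exact Or.inl ⟨h, hz.ge⟩
      · exact Or.inr (Or.inl ⟨h, hz.le⟩)
  have subU : Us.Subsingleton := by
    intro i hi j hj
    by_contra hne
    rcases lt_or_gt_of_ne hne with h | h
    · exact keyU i j hi hj h
    · exact keyU j i hj hi h
  have subD : Ds.Subsingleton := by
    intro i hi j hj
    by_contra hne
    rcases lt_or_gt_of_ne hne with h | h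
    · exact keyD i j hi hj h
    · exact keyD j i hj hi h
  have subZ : Zs.Subsingleton := by
    intro i hi j hj
    simp only [hZs, Set.mem_setOf_eq] at hi hj
    exact Fin.ext (by omega)
  set Cs : Set (Fin m) := {i | CrossSeg u v x i} with hCs
  have hvf : vfLine u v x = Cs.ncard := by
    rw [vfLine]
    exact Nat.card_coe_set_eq Cs
  rw [hvf]
  have bound : ∀ P Q : Set (Fin m), P.Subsingleton → Q.Subsingleton → Cs ⊆ P ∪ Q →
      Cs.ncard ≤ 2 := by
    intro P Q hP hQ hsub
    calc Cs.ncard ≤ (P ∪ Q).ncard := Set.ncard_le_ncard hsub (Set.toFinite _)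
      _ ≤ P.ncard + Q.ncard := Set.ncard_union_le _ _
      _ ≤ 1 + 1 := add_le_add ((Set.ncard_le_one (Set.toFinite _)).mpr (fun a ha b hb => hP ha hb))
          ((Set.ncard_le_one (Set.toFinite _)).mpr (fun a ha b hb => hQ ha hb))
  by_cases hz : ∃ i ∈ Cs, i ∈ Zs ∧ s i.castSucc = 0
  · obtain ⟨z, hzC, hz0, hsz⟩ := hz
    have h00 : s 0 = 0 := by
      have : z.castSucc = (0 : Fin (m+1)) := Fin.ext (by simpa [hZs] using hz0)
      rwa [this] at hsz
    by_cases hd : ∃ j ∈ Cs, j ∈ Ds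
    · obtain ⟨j, hjC, hjD⟩ := hd
      refine bound Ds Zs subD subZ ?_
      intro i hi
      rcases classify i hi with hU' | hD' | hZ'
      · exfalso
        rcases lt_trichotomy i j with h | h | h
        · exact keyUD i j hU' hjD h
        · rw [h] at hU'
          linarith [hU'.1, hjD.1]
        · exact keyZDU h00 j i hjD hU' h
      · exact Or.inl hD'
      · exact Or.inr hZ'.1
    · refine bound Us Zs subU subZ ?_
      intro i hi
      rcases classify i hi with hU' | hD' | hZ'
      · exact Or.inl hU'
      · exact absurd ⟨i, hi, hD'⟩ hd
      · exact Or.inr hZ'.1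
  · refine bound Us Ds subU subD ?_
    intro i hi
    rcases classify i hi with hU' | hD' | hZ'
    · exact Or.inl hU'
    · exact Or.inr hD'
    · exact absurd ⟨i, hi, hZ'⟩ hz


lemma vf_le_two (g : ℝ → ℝ) (hconv : ConvexOn ℝ (Set.Icc 0 1) g) {m : ℕ}
    (w : Fin (m+1) → ℝ) (hwI : ∀ j, w j ∈ Set.Icc (0:ℝ) 1)
    (hwst : StrictMono w) :
    vf (fun j => (w j, g (w j))) ≤ 2 := by
  set x : Fin (m+1) → ℝ × ℝ := fun j => (w j, g (w j)) with hx
  apply vf_le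
  suffices hkey : ∀ u v : ℝ × ℝ, 0 ≤ v.1 → vfLine u v x ≤ 2 by
    intro u v hv
    rcases le_or_gt 0 v.1 with h | h
    · exact hkey u v h
    · rw [← vfLine_negdir]
      exact hkey u (-v) (by rw [Prod.fst_neg]; linarith)
  intro u v hv1
  have comb : ∀ a b c : Fin (m+1), a < b → b < c →
      ∃ l : ℝ, 0 < l ∧ l < 1 ∧
        sideR u v (x b) ≤ l * sideR u v (x a) + (1-l) * sideR u v (x c) := by
    intro a b c hab hbc
    have h1 : w a < w b := hwst hab
    have h2 : w b < w c := hwst hbc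
    have hac : w a < w c := h1.trans h2
    set l : ℝ := (w c - w b)/(w c - w a) with hl
    have hl0 : 0 < l := div_pos (by linarith) (by linarith)
    have hl1 : l < 1 := (div_lt_one (by linarith)).mpr (by linarith)
    have hne : w c - w a ≠ 0 := sub_ne_zero.mpr (ne_of_gt hac)
    have hlmul : l * (w c - w a) = w c - w b := by
      rw [hl]; exact div_mul_cancel₀ _ hne
    have heq : w b = l * w a + (1 - l) * w c := by nlinarith [hlmul]
    have hgb : g (w b) ≤ l * g (w a) + (1-l) * g (w c) := by
      have hcc := hconv.2 (hwI a) (hwI c) (hl0.le : (0:ℝ) ≤ l)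
        (show (0:ℝ) ≤ 1 - l by linarith) (show l + (1 - l) = 1 by ring)
      rw [smul_eq_mul, smul_eq_mul, smul_eq_mul, smul_eq_mul] at hcc
      rwa [← heq] at hcc
    refine ⟨l, hl0, hl1, ?_⟩
    have hx1 : ∀ j : Fin (m+1), sideR u v (x j) = v.1 * (g (w j) - u.2) - v.2 * (w j - u.1) :=
      fun j => sideR_eval u v (w j) (g (w j))
    rw [hx1 a, hx1 b, hx1 c]
    have hmul := mul_le_mul_of_nonneg_left hgb hv1
    have hid : l * (v.1 * (g (w a) - u.2) - v.2 * (w a - u.1))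
        + (1-l) * (v.1 * (g (w c) - u.2) - v.2 * (w c - u.1))
        - (v.1 * (g (w b) - u.2) - v.2 * (w b - u.1))
        = v.1 * ((l * g (w a) + (1-l) * g (w c)) - g (w b))
          + v.2 * (w b - (l * w a + (1-l) * w c)) := by ring
    have h2 : 0 ≤ v.1 * ((l * g (w a) + (1-l) * g (w c)) - g (w b)) := by nlinarith [hmul]
    have h3 : v.2 * (w b - (l * w a + (1-l) * w c)) = 0 := by
      rw [show w b - (l * w a + (1-l) * w c) = 0 from sub_eq_zero.mpr heq, mul_zero]
    linarith [hid, h2, h3]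
  apply crossings_le_two
  · intro a b c hab hbc ha hc
    obtain ⟨l, hl0, hl1, hcomb⟩ := comb a b c hab hbc
    have t1 : l * sideR u v (x a) ≤ 0 := mul_nonpos_iff.mpr (Or.inl ⟨hl0.le, ha⟩)
    have t2 : (1-l) * sideR u v (x c) ≤ 0 := mul_nonpos_iff.mpr (Or.inl ⟨by linarith, hc⟩)
    linarith
  · intro a b c hab hbc ha hc hst
    obtain ⟨l, hl0, hl1, hcomb⟩ := comb a b c hab hbc
    rcases hst with h | h
    · have t1 : l * sideR u v (x a) < 0 := mul_neg_of_pos_of_neg hl0 h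
      have t2 : (1-l) * sideR u v (x c) ≤ 0 := mul_nonpos_iff.mpr (Or.inl ⟨by linarith, hc⟩)
      linarith
    · have t1 : l * sideR u v (x a) ≤ 0 := mul_nonpos_iff.mpr (Or.inl ⟨hl0.le, ha⟩)
      have t2 : (1-l) * sideR u v (x c) < 0 := mul_neg_of_pos_of_neg (by linarith) h
      linarith


lemma right_ineq (g : ℝ → ℝ) (hconv : ConvexOn ℝ (Set.Icc 0 1) g)
    (f : ℝ × ℝ → ℂ) (n : ℕ) (u : ℕ → ℝ) (hu : Monotone u)
    (hus : ∀ i, u i ∈ Set.Icc (0:ℝ) 1) :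
    ∑ i ∈ Finset.range n, edist (f (u (i+1), g (u (i+1)))) (f (u i, g (u i)))
      ≤ 2 * twoVar f ((fun t => (t, g t)) '' Set.Icc 0 1) := by
  classical
  set C : Set (ℝ × ℝ) := (fun t => (t, g t)) '' Set.Icc 0 1 with hCdef
  set F : ℝ → ℂ := fun t => f (t, g t) with hF
  set R : Finset ℝ := (Finset.range (n+1)).image u with hR
  set r := R.card with hrdef
  have huR : ∀ i, i ≤ n → u i ∈ R := fun i hi =>
    Finset.mem_image_of_mem u (Finset.mem_range.mpr (by omega))
  have hr1 : 1 ≤ r := Finset.card_pos.mpr ⟨u 0, huR 0 (by omega)⟩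
  have hRI : ∀ a : ℝ, a ∈ R → a ∈ Set.Icc (0:ℝ) 1 := by
    intro a ha
    rw [hR, Finset.mem_image] at ha
    obtain ⟨i, _, rfl⟩ := ha
    exact hus i
  set e := R.orderIsoOfFin rfl with he
  set W : ℕ → ℝ := fun j => if h : j < r then (e ⟨j, h⟩ : ℝ) else 1 with hW
  have hWT : ∀ j (h : j < r), W j = (e ⟨j, h⟩ : ℝ) := fun j h => by rw [hW]; simp [h]
  have hWI : ∀ j, j < r → W j ∈ Set.Icc (0:ℝ) 1 := by
    intro j h
    rw [hWT j h]
    exact hRI _ (e ⟨j, h⟩).2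
  have hWstrict : ∀ j k : ℕ, j < k → k < r → W j < W k := by
    intro j k hjk hk
    have hj : j < r := lt_trans hjk hk
    rw [hWT j hj, hWT k hk]
    exact Subtype.coe_lt_coe.mpr (e.strictMono (by exact hjk))
  set m := r - 1 with hm
  have hmr : m + 1 = r := by omega
  -- index of u i in the grid
  set ind : ℕ → ℕ := fun i => if h : i ≤ n then ((e.symm ⟨u i, huR i h⟩ : Fin r) : ℕ) else 0
    with hind
  have hind_eq : ∀ i (h : i ≤ n), ind i = ((e.symm ⟨u i, huR i h⟩ : Fin r) : ℕ) :=
    fun i h => by rw [hind]; simp [h]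
  have hindlt : ∀ i (h : i ≤ n), ind i < r := by
    intro i h
    rw [hind_eq i h]
    exact (e.symm ⟨u i, huR i h⟩).isLt
  have hWind : ∀ i (h : i ≤ n), W (ind i) = u i := by
    intro i h
    rw [hWT _ (hindlt i h)]
    have h3 : (⟨ind i, hindlt i h⟩ : Fin r) = e.symm ⟨u i, huR i h⟩ := Fin.ext (hind_eq i h)
    have h2 : e ⟨ind i, hindlt i h⟩ = ⟨u i, huR i h⟩ := by
      rw [h3]; exact e.apply_symm_apply _
    exact congrArg Subtype.val h2
  have hindmono : ∀ i i' (h : i ≤ n) (h' : i' ≤ n), u i < u i' → ind i < ind i' := by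
    intro i i' h h' hlt
    rw [hind_eq i h, hind_eq i' h']
    exact e.symm.strictMono (Subtype.mk_lt_mk.mpr hlt)
  have hkeysucc : ∀ i, i < n → u i < u (i+1) → ind (i+1) = ind i + 1 := by
    intro i hin hlt
    have h1 : i ≤ n := by omega
    have h2 : i + 1 ≤ n := by omega
    have hab : ind i < ind (i+1) := hindmono i (i+1) h1 h2 hlt
    by_contra hne
    have hgap : ind i + 1 < ind (i+1) := by omega
    have hc : ind i + 1 < r := lt_trans hgap (hindlt (i+1) h2)
    have hWc : W (ind i + 1) ∈ R := by
      rw [hWT _ hc]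
      exact (e ⟨ind i + 1, hc⟩).2
    rw [hR, Finset.mem_image] at hWc
    obtain ⟨l, hl, hWl⟩ := hWc
    rw [Finset.mem_range] at hl
    have hlow : u i < W (ind i + 1) := by
      rw [← hWind i h1]
      exact hWstrict _ _ (by omega) hc
    have hhigh : W (ind i + 1) < u (i+1) := by
      rw [← hWind (i+1) h2]
      exact hWstrict _ _ hgap (hindlt (i+1) h2)
    rcases le_or_gt l i with hli | hli
    · exact absurd (hu hli) (not_le.mpr (by rw [hWl]; exact hlow))
    · exact absurd (hu (show i + 1 ≤ l by omega)) (not_le.mpr (by rw [hWl]; exact hhigh))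
  -- the strict list
  set x : Fin (m+1) → ℝ × ℝ := fun j => (W (j : ℕ), g (W (j : ℕ))) with hx
  have hxmem : ∀ j, x j ∈ C := by
    intro j
    rw [hCdef]
    exact ⟨W (j : ℕ), hWI _ (by omega), rfl⟩
  have hxne : ∀ j : Fin m, x j.castSucc ≠ x j.succ := by
    intro j hne
    have h1 : W (j : ℕ) < W ((j : ℕ)+1) := hWstrict _ _ (by omega) (by omega)
    have h2 : (x j.castSucc).1 = W (j : ℕ) := rfl
    have h3 : (x j.succ).1 = W ((j : ℕ)+1) := rfl
    rw [hne] at h2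
    rw [h2] at h3
    exact absurd h3 (ne_of_lt h1)
  have hvf2 : vf x ≤ 2 := by
    have := vf_le_two g hconv (fun j : Fin (m+1) => W (j : ℕ))
      (fun j => hWI _ (by omega))
      (fun j k hjk => hWstrict _ _ hjk (by omega))
    exact this
  set E : ℕ → ℝ≥0∞ := fun j => edist (F (W (j+1))) (F (W j)) with hE
  set J : Finset ℕ := (Finset.range n).filter (fun i => u i < u (i+1)) with hJ
  have main : ∑ i ∈ Finset.range n, edist (F (u (i+1))) (F (u i))
      ≤ ∑ j ∈ Finset.range m, E j := by
    calc ∑ i ∈ Finset.range n, edist (F (u (i+1))) (F (u i))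
        = ∑ i ∈ J, edist (F (u (i+1))) (F (u i)) := by
          rw [hJ, ← Finset.sum_filter_add_sum_filter_not (Finset.range n)
            (fun i => u i < u (i+1))]
          have hz : ∑ i ∈ (Finset.range n).filter (fun i => ¬ u i < u (i+1)),
              edist (F (u (i+1))) (F (u i)) = 0 := by
            apply Finset.sum_eq_zero
            intro i hi
            rw [Finset.mem_filter] at hi
            have hle : u i ≤ u (i+1) := hu (by omega)
            have heq : u i = u (i+1) := le_antisymm hle (not_lt.mp hi.2)
            rw [heq]
            exact edist_self _
          rw [hz, add_zero]
      _ = ∑ i ∈ J, E (ind i) := by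
          apply Finset.sum_congr rfl
          intro i hi
          rw [hJ, Finset.mem_filter, Finset.mem_range] at hi
          have h1 : i ≤ n := by omega
          have h2 : i + 1 ≤ n := by omega
          have e1 : W (ind i) = u i := hWind i h1
          have e2 : W (ind i + 1) = u (i+1) := by
            rw [← hkeysucc i hi.1 hi.2]
            exact hWind (i+1) h2
          show edist (F (u (i+1))) (F (u i)) = edist (F (W (ind i + 1))) (F (W (ind i)))
          rw [e1, e2]
      _ = ∑ j ∈ J.image ind, E j := by
          rw [Finset.sum_image]
          intro i hi i' hi' heq
          simp only [hJ, Finset.coe_filter, Finset.mem_coe, Finset.mem_filter, Finset.mem_range, Set.mem_setOf_eq] at hi hi'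
          by_contra hne
          rcases lt_or_gt_of_ne hne with h | h
          · have : u i < u i' := lt_of_lt_of_le hi.2 (hu (by omega))
            exact absurd heq (ne_of_lt (hindmono i i' (by omega) (by omega) this))
          · have : u i' < u i := lt_of_lt_of_le hi'.2 (hu (by omega))
            exact absurd heq.symm (ne_of_lt (hindmono i' i (by omega) (by omega) this))
      _ ≤ ∑ j ∈ Finset.range m, E j := by
          apply Finset.sum_le_sum_of_subset
          intro j hj
          rw [Finset.mem_image] at hj
          obtain ⟨i, hi, rfl⟩ := hj
          rw [hJ, Finset.mem_filter, Finset.mem_range] at hi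
          rw [Finset.mem_range]
          have := hkeysucc i hi.1 hi.2
          have := hindlt (i+1) (by omega)
          omega
  have hsum_cvar : ∑ j ∈ Finset.range m, E j = ENNReal.ofReal (cvar f x) := by
    rw [cvar, ENNReal.ofReal_sum_of_nonneg (fun i _ => norm_nonneg _)]
    rw [← Fin.sum_univ_eq_sum_range (fun j => E j) m]
    apply Finset.sum_congr rfl
    intro j _
    show edist (F (W ((j : ℕ)+1))) (F (W (j : ℕ)))
      = ENNReal.ofReal ‖f (x j.succ) - f (x j.castSucc)‖
    rw [edist_dist, Complex.dist_eq]
    rfl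
  have hterm : ENNReal.ofReal (cvar f x) / (vf x : ℝ≥0∞) ≤ twoVar f C := by
    rw [twoVar]
    refine le_iSup_of_le m ?_
    refine le_iSup_of_le x ?_
    refine le_iSup_of_le hxmem ?_
    exact le_iSup_of_le hxne le_rfl
  calc ∑ i ∈ Finset.range n, edist (f (u (i+1), g (u (i+1)))) (f (u i, g (u i)))
      = ∑ i ∈ Finset.range n, edist (F (u (i+1))) (F (u i)) := rfl
    _ ≤ ∑ j ∈ Finset.range m, E j := main
    _ = ENNReal.ofReal (cvar f x) := hsum_cvar
    _ = 2 * (ENNReal.ofReal (cvar f x) / 2) :=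
        (ENNReal.mul_div_cancel two_ne_zero ENNReal.ofNat_ne_top).symm
    _ ≤ 2 * (ENNReal.ofReal (cvar f x) / (vf x : ℝ≥0∞)) := by
        apply mul_le_mul_right
        exact ENNReal.div_le_div_left (by exact_mod_cast hvf2) _
    _ ≤ 2 * twoVar f C := mul_le_mul_right hterm _

theorem stmt15 (g : ℝ → ℝ) (hgc : ContinuousOn g (Set.Icc 0 1))
    (hconv : ConvexOn ℝ (Set.Icc 0 1) g)
    (C : Set (ℝ × ℝ)) (hC : C = (fun t => (t, g t)) '' Set.Icc 0 1)
    (f : ℝ × ℝ → ℂ) :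
    twoVar f C ≤ eVariationOn (fun t => f (t, g t)) (Set.Icc 0 1) ∧
    eVariationOn (fun t => f (t, g t)) (Set.Icc 0 1) ≤ 2 * twoVar f C := by
  constructor
  · rw [twoVar]
    refine iSup_le fun n => iSup_le fun x => iSup_le fun hmem => iSup_le fun hne => ?_
    exact left_ineq g f x (fun i => hC ▸ hmem i) hne
  · rw [eVariationOn]
    refine iSup_le fun p => ?_
    obtain ⟨n, u, hu, hus⟩ := p
    have := right_ineq g hconv f n u hu hus
    rw [← hC] at this
    exact this
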